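/- Let p, q be nonnegative integers with q ≥ 1. Then for all nonnegative integers i, j, A_{p,q}(i,j)/A_{p,q-1}(i,j) ≥ (p+q+i+1)/(p+q+1), where the ratio is taken as a real number. -/
import Mathlib


/-- The generalized Eulerian number `eulerA p q i j` counts the paths in the Euler graph
from `(p, q)` to `(p + i, q + j)`.  It is defined by the initial conditions
`eulerA p q i 0 = (q+1)^i`, `eulerA p q 0 j = (p+1)^j` and the recurrence
`eulerA p q i j = (j+q+1) * eulerA p q (i-1) j + (i+p+1) * eulerA p q i (j-1)`. -/
def eulerA (p q : ℕ) : ℕ → ℕ → ℕ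
  | i, 0 => (q + 1) ^ i
  | 0, j + 1 => (p + 1) ^ (j + 1)
  | i + 1, j + 1 =>
      (j + 1 + q + 1) * eulerA p q i (j + 1) + (i + 1 + p + 1) * eulerA p q (i + 1) j

lemma eulerA_zero_right (p q i : ℕ) : eulerA p q i 0 = (q + 1) ^ i := by
  simp [eulerA]

lemma eulerA_zero_left (p q j : ℕ) : eulerA p q 0 j = (p + 1) ^ j := by
  cases j <;> simp [eulerA]

lemma eulerA_rec (p q i j : ℕ) :
    eulerA p q (i + 1) (j + 1) =
      (j + 1 + q + 1) * eulerA p q i (j + 1) + (i + 1 + p + 1) * eulerA p q (i + 1) j := by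
  simp [eulerA]

lemma eulerA_pos (p q : ℕ) : ∀ i j, 0 < eulerA p q i j := by
  intro i
  induction i with
  | zero =>
    intro j; rw [eulerA_zero_left]; positivity
  | succ i ih =>
    intro j
    induction j with
    | zero => rw [eulerA_zero_right]; positivity
    | succ j ihj =>
      rw [eulerA_rec]
      have h1 := ih (j + 1)
      positivity

/-- auxiliary identity for the column `j = 1`. -/
lemma eulerA_one_col (p r : ℕ) :
    ∀ i, (p + r + 2) * (r + 2) ^ (i + 1)
      = eulerA p r i 1 + (p + r + 3 + i) * (r + 1) ^ (i + 1) := by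
  intro i
  induction i with
  | zero =>
    rw [eulerA_zero_left]
    ring
  | succ i ih =>
    have hrec : eulerA p r (i + 1) 1 =
        (0 + 1 + r + 1) * eulerA p r i 1 + (i + 1 + p + 1) * eulerA p r (i + 1) 0 :=
      eulerA_rec p r i 0
    rw [eulerA_zero_right] at hrec
    zify at ih hrec ⊢
    linear_combination ((r : ℤ) + 2) * ih - hrec

/-- The key identity:
`(p+q+1) * A_{p,q}(i+1,j) = (p+q+i+2) * A_{p,q-1}(i+1,j) + (j+1) * A_{p,q-1}(i,j+1)`
with `q = r + 1`. -/
lemma eulerA_key (p r : ℕ) :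
    ∀ i j, (p + r + 2) * eulerA p (r + 1) (i + 1) j
      = (p + r + 3 + i) * eulerA p r (i + 1) j + (j + 1) * eulerA p r i (j + 1) := by
  intro i
  induction i with
  | zero =>
    intro j
    induction j with
    | zero =>
      rw [eulerA_zero_right, eulerA_zero_right, eulerA_zero_left]
      ring
    | succ j ihj =>
      have hA : eulerA p (r + 1) 1 (j + 1) =
          (j + 1 + (r + 1) + 1) * eulerA p (r + 1) 0 (j + 1)
            + (0 + 1 + p + 1) * eulerA p (r + 1) 1 j := eulerA_rec p (r + 1) 0 j
      have hB : eulerA p r 1 (j + 1) =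
          (j + 1 + r + 1) * eulerA p r 0 (j + 1) + (0 + 1 + p + 1) * eulerA p r 1 j :=
        eulerA_rec p r 0 j
      rw [eulerA_zero_left] at hA hB
      have hB0 : eulerA p r 0 (j + 1 + 1) = (p + 1) ^ (j + 1 + 1) := eulerA_zero_left p r _
      have hB0' : eulerA p r 0 (j + 1) = (p + 1) ^ (j + 1) := eulerA_zero_left p r _
      zify at hA hB hB0 hB0' ihj ⊢
      rw [hB0, hB0'] at *
      linear_combination (p + r + 2 : ℤ) * hA - (p + r + 3 : ℤ) * hB + (p + 2 : ℤ) * ihj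
        + ((p + 1 : ℤ) * (j + 2) - (p + r + 2) * (j + 1 + (r + 1) + 1)
            + (p + r + 3) * (j + 1 + r + 1)) * (pow_succ ((p : ℤ) + 1) (j + 1)).symm
  | succ i ih =>
    intro j
    induction j with
    | zero =>
      have h := eulerA_one_col p r (i + 1)
      have h1 : eulerA p r (i + 1) (0 + 1) = eulerA p r (i + 1) 1 := rfl
      rw [eulerA_zero_right, eulerA_zero_right, h1]
      zify at h ⊢
      linear_combination h
    | succ j ihj =>
      have hA : eulerA p (r + 1) (i + 2) (j + 1) =
          (j + 1 + (r + 1) + 1) * eulerA p (r + 1) (i + 1) (j + 1)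
            + (i + 1 + 1 + p + 1) * eulerA p (r + 1) (i + 2) j := eulerA_rec p (r + 1) (i + 1) j
      have hB : eulerA p r (i + 2) (j + 1) =
          (j + 1 + r + 1) * eulerA p r (i + 1) (j + 1)
            + (i + 1 + 1 + p + 1) * eulerA p r (i + 2) j := eulerA_rec p r (i + 1) j
      have hB' : eulerA p r (i + 1) (j + 1 + 1) =
          (j + 1 + 1 + r + 1) * eulerA p r i (j + 1 + 1)
            + (i + 1 + p + 1) * eulerA p r (i + 1) (j + 1) := eulerA_rec p r i (j + 1)
      have hIH := ih (j + 1)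
      zify at hA hB hB' hIH ihj ⊢
      linear_combination (p + r + 2 : ℤ) * hA - (p + r + 3 + (i + 1) : ℤ) * hB
        - ((j : ℤ) + 2) * hB' + ((j : ℤ) + 1 + (r + 1) + 1) * hIH + ((i : ℤ) + p + 3) * ihj

theorem stmt15 (p q : ℕ) (hq : 1 ≤ q) (i j : ℕ) :
    ((p : ℝ) + q + i + 1) / ((p : ℝ) + q + 1) ≤
      (eulerA p q i j : ℝ) / (eulerA p (q - 1) i j) := by
  obtain ⟨r, rfl⟩ : ∃ r, q = r + 1 := ⟨q - 1, (Nat.succ_pred_eq_of_pos hq).symm⟩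
  have hsub : r + 1 - 1 = r := rfl
  rw [hsub]
  have hBpos : (0 : ℝ) < (eulerA p r i j : ℝ) := by
    exact_mod_cast eulerA_pos p r i j
  have hCpos : (0 : ℝ) < (p : ℝ) + (r + 1 : ℕ) + 1 := by positivity
  rw [div_le_div_iff₀ hCpos hBpos]
  cases i with
  | zero =>
    have hAB : eulerA p (r + 1) 0 j = eulerA p r 0 j := by
      rw [eulerA_zero_left, eulerA_zero_left]
    rw [hAB]
    push_cast
    nlinarith [hBpos]
  | succ i =>
    have hkey := eulerA_key p r i j
    have hkeyR : ((p : ℝ) + r + 2) * eulerA p (r + 1) (i + 1) j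
        = ((p : ℝ) + r + 3 + i) * eulerA p r (i + 1) j + ((j : ℝ) + 1) * eulerA p r i (j + 1) :=
      by exact_mod_cast hkey
    have hextra : (0 : ℝ) ≤ ((j : ℝ) + 1) * eulerA p r i (j + 1) := by positivity
    push_cast
    nlinarith [hkeyR, hextra, hBpos]
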